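/- Let Ω₂ be a second Brocard point of triangle ABC. Then the pedal triangle A₁B₁C₁ of Ω₂ is similar to triangle CAB: its side lengths satisfy dist B₁ C₁ : dist C₁ A₁ : dist A₁ B₁ = c : a : b, i.e. a · dist B₁ C₁ = c · dist C₁ A₁ and b · dist C₁ A₁ = a · dist A₁ B₁. -/

import Mathlib

open EuclideanGeometry
open scoped EuclideanGeometry
open scoped RealInnerProductSpace

noncomputable section

private abbrev E2 := EuclideanSpace ℝ (Fin 2)

/-- 2D cross product. -/
private def cr (x y : E2) : ℝ := x 0 * y 1 - x 1 * y 0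

private lemma inner_coords (x y : E2) : ⟪x, y⟫ = x 0 * y 0 + x 1 * y 1 := by
  simp [PiLp.inner_apply, Fin.sum_univ_two, RCLike.inner_apply]
  ring

private lemma dist_sq_coords (x y : E2) :
    dist x y ^ 2 = (x 0 - y 0) ^ 2 + (x 1 - y 1) ^ 2 := by
  rw [EuclideanSpace.dist_eq, Real.sq_sqrt (by positivity)]
  simp [Fin.sum_univ_two, Real.dist_eq, sq_abs]

private lemma foot_eq (X Y p : E2) (h : Y ≠ X) :
    ((EuclideanGeometry.orthogonalProjection (affineSpan ℝ {Y, X}) p : E2)) =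
      (⟪p - X, Y - X⟫ / ⟪Y - X, Y - X⟫) • (Y - X) + X := by
  set t : ℝ := ⟪p - X, Y - X⟫ / ⟪Y - X, Y - X⟫ with ht
  have hYX : Y - X ≠ 0 := sub_ne_zero.mpr h
  have hne : ⟪Y - X, Y - X⟫ ≠ 0 := by
    exact inner_self_ne_zero.mpr hYX
  have hdir : (affineSpan ℝ ({Y, X} : Set E2)).direction = ℝ ∙ (Y - X) := by
    rw [direction_affineSpan, vectorSpan_pair]
    rfl
  have hmem : t • (Y - X) + X ∈ affineSpan ℝ ({Y, X} : Set E2) := by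
    have hX : X ∈ affineSpan ℝ ({Y, X} : Set E2) :=
      mem_affineSpan ℝ (by simp)
    have : t • (Y - X) ∈ (affineSpan ℝ ({Y, X} : Set E2)).direction := by
      rw [hdir]; exact Submodule.smul_mem _ _ (Submodule.mem_span_singleton_self _)
    simpa using AffineSubspace.vadd_mem_of_mem_direction this hX
  have hperp : t • (Y - X) + X - p ∈ (affineSpan ℝ ({Y, X} : Set E2)).directionᗮ := by
    rw [hdir, Submodule.mem_orthogonal_singleton_iff_inner_right]
    have : ⟪Y - X, t • (Y - X) + X - p⟫ = t * ⟪Y - X, Y - X⟫ - ⟪Y - X, p - X⟫ := by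
      rw [show t • (Y - X) + X - p = t • (Y - X) - (p - X) by abel]
      rw [inner_sub_right, real_inner_smul_right]
    rw [this, ht, real_inner_comm (p - X), div_mul_cancel₀ _ hne, sub_self]
  have hsing := EuclideanGeometry.inter_eq_singleton_orthogonalProjection
      (s := affineSpan ℝ ({Y, X} : Set E2)) p
  have : t • (Y - X) + X ∈ ((affineSpan ℝ ({Y, X} : Set E2)) : Set E2) ∩
      AffineSubspace.mk' p (affineSpan ℝ ({Y, X} : Set E2)).directionᗮ := by
    refine ⟨hmem, ?_⟩
    rw [AffineSubspace.mem_coe, AffineSubspace.mem_mk']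
    simpa using hperp
  rw [hsing] at this
  exact this.symm

private lemma cr_ne_zero_of_affineIndependent {A B C : E2} (h : AffineIndependent ℝ ![A, B, C]) :
    cr (B - A) (C - A) ≠ 0 := by
  intro hcr
  apply affineIndependent_iff_not_collinear_set.mp h
  rw [collinear_iff_exists_forall_eq_smul_vadd]
  by_cases hBA : B - A = 0
  · refine ⟨A, C - A, ?_⟩
    intro x hx
    simp only [Set.mem_insert_iff, Set.mem_singleton_iff] at hx
    rcases hx with h' | h' | h' <;> subst h'
    · exact ⟨0, by simp⟩
    · exact ⟨0, by rw [sub_eq_zero] at hBA; simp [hBA]⟩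
    · exact ⟨1, by simp⟩
  · refine ⟨A, B - A, ?_⟩
    have hne : (B - A) 0 ^ 2 + (B - A) 1 ^ 2 ≠ 0 := by
      intro h0
      apply hBA
      have h1 : (B - A) 0 = 0 := by nlinarith [sq_nonneg ((B-A) 0), sq_nonneg ((B-A) 1)]
      have h2 : (B - A) 1 = 0 := by nlinarith [sq_nonneg ((B-A) 0), sq_nonneg ((B-A) 1)]
      ext i
      fin_cases i <;> simpa [h1, h2]
    intro x hx
    simp only [Set.mem_insert_iff, Set.mem_singleton_iff] at hx
    rcases hx with h' | h' | h' <;> subst h'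
    · exact ⟨0, by simp⟩
    · exact ⟨1, by simp⟩
    · refine ⟨((x - A) 0 * (B - A) 0 + (x - A) 1 * (B - A) 1) /
        ((B - A) 0 ^ 2 + (B - A) 1 ^ 2), ?_⟩
      have hcr' : (B - A) 0 * (x - A) 1 - (B - A) 1 * (x - A) 0 = 0 := by
        simp only [cr] at hcr; linarith [hcr]
      ext i
      fin_cases i
      · simp only [vadd_eq_add, PiLp.add_apply, PiLp.smul_apply, smul_eq_mul,
          Fin.isValue, PiLp.sub_apply, Fin.mk_zero, Fin.mk_one] at *
        rw [div_mul_eq_mul_div, div_add' _ _ _ hne, eq_comm, div_eq_iff hne]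
        linear_combination (B 1 - A 1) * hcr'
      · simp only [vadd_eq_add, PiLp.add_apply, PiLp.smul_apply, smul_eq_mul,
          Fin.isValue, PiLp.sub_apply, Fin.mk_zero, Fin.mk_one] at *
        rw [div_mul_eq_mul_div, div_add' _ _ _ hne, eq_comm, div_eq_iff hne]
        linear_combination (-(B 0 - A 0)) * hcr'

private lemma interior_cr_pos {A B C P : E2} (hK : cr (B - A) (C - A) ≠ 0)
    (hP : P ∈ interior (convexHull ℝ ({A, B, C} : Set E2))) :
    0 < cr (B - A) (C - A) * cr (P - A) (C - A) := by
  set K := cr (B - A) (C - A) with hKdef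
  set e : E2 := C - A with he
  have hL : IsLinearMap ℝ (fun v : E2 => K * (v 0 * e 1 - v 1 * e 0)) := by
    constructor
    · intro u v; simp only [PiLp.add_apply]; ring
    · intro c v; simp only [PiLp.smul_apply, smul_eq_mul]; ring
  set L : E2 → ℝ := fun v => K * (v 0 * e 1 - v 1 * e 0) with hLdef
  have hLsub : ∀ u v : E2, L (u - v) = L u - L v := by
    intro u v; simp only [hLdef, PiLp.sub_apply]; ring
  have hLdiff : ∀ v : E2, L v - L A = K * cr (v - A) e := by
    intro v
    rw [← hLsub]
    rfl
  have hhalf : convexHull ℝ ({A, B, C} : Set E2) ⊆ {x | L A ≤ L x} := by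
    apply convexHull_min
    · rintro x hx
      simp only [Set.mem_insert_iff, Set.mem_singleton_iff] at hx
      simp only [Set.mem_setOf_eq]
      rcases hx with h | h | h <;> rw [h]
      · have := hLdiff B
        rw [← hKdef] at this
        nlinarith [sq_nonneg K]
      · have := hLdiff C
        have h0 : cr (C - A) e = 0 := by rw [he]; simp only [cr]; ring
        rw [h0, mul_zero] at this
        linarith
    · exact convex_halfSpace_ge hL (L A)
  have hPhull : L A ≤ L P := hhalf (interior_subset hP)
  set w : E2 := WithLp.toLp 2 (fun i : Fin 2 => if i = 0 then K * e 1 else -(K * e 0)) with hw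
  have hw0 : w 0 = K * e 1 := rfl
  have hw1 : w 1 = -(K * e 0) := rfl
  have he2 : 0 < e 0 ^ 2 + e 1 ^ 2 := by
    rcases lt_or_ge 0 (e 0 ^ 2 + e 1 ^ 2) with h | h
    · exact h
    · exfalso
      have h0 : e 0 = 0 := by nlinarith [sq_nonneg (e 0), sq_nonneg (e 1)]
      have h1 : e 1 = 0 := by nlinarith [sq_nonneg (e 0), sq_nonneg (e 1)]
      apply hK
      show (B - A) 0 * e 1 - (B - A) 1 * e 0 = 0
      rw [h0, h1]; ring
  have hK2 : 0 < K ^ 2 := by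
    have : K ≠ 0 := hK
    positivity
  have hm : 0 < L w := by
    have hlw : L w = K ^ 2 * (e 0 ^ 2 + e 1 ^ 2) := by
      simp only [hLdef, hw0, hw1]; ring
    rw [hlw]
    positivity
  rcases Metric.mem_nhds_iff.mp (mem_interior_iff_mem_nhds.mp hP) with ⟨ε, hε, hball⟩
  by_contra hcon
  push_neg at hcon
  have hEq : L P = L A := by
    have h1 := hLdiff P
    have h2 : K * cr (P - A) e ≤ 0 := hcon
    linarith
  set δ : ℝ := ε / (2 * (‖w‖ + 1)) with hδ
  have hδpos : 0 < δ := by positivity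
  have hX : P - δ • w ∈ Metric.ball P ε := by
    rw [Metric.mem_ball, dist_eq_norm]
    have h3 : P - δ • w - P = -(δ • w) := by abel
    rw [h3, norm_neg, norm_smul, Real.norm_eq_abs, abs_of_pos hδpos]
    calc δ * ‖w‖ < δ * (2 * (‖w‖ + 1)) := by
          apply mul_lt_mul_of_pos_left _ hδpos
          nlinarith [norm_nonneg w]
      _ = ε := by
          rw [hδ, div_mul_cancel₀]
          positivity
  have hXhull : L A ≤ L (P - δ • w) := hhalf (hball hX)
  have hLX : L (P - δ • w) = L P - δ * L w := by
    rw [hLsub]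
    have h4 : L (δ • w) = δ * L w := hL.map_smul δ w
    rw [h4]
  rw [hLX, hEq] at hXhull
  nlinarith

private lemma chainstep (u w : ℂ) (d e : ℝ) (q : ℂ) (hd : 0 < d)
    (hu : Complex.normSq u = d ^ 2)
    (h : (starRingEnd ℂ u) * (u - w) = ((d * e : ℝ) : ℂ) * q) :
    w = u * (1 - ((e / d : ℝ) : ℂ) * q) := by
  have hd0 : (d : ℂ) ≠ 0 := by simpa using ne_of_gt hd
  have key : ((d : ℂ) ^ 2) * (u - w) = ((d : ℝ) : ℂ) * (e : ℂ) * q * u := by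
    have h2 := congrArg (· * u) h
    rw [mul_comm (starRingEnd ℂ u) (u - w), mul_assoc, mul_comm (starRingEnd ℂ u) u,
      Complex.mul_conj, hu] at h2
    push_cast at h2 ⊢
    linear_combination h2
  have key2 : (d : ℂ) * (u - w) = (e : ℂ) * q * u := by
    apply mul_left_cancel₀ hd0
    linear_combination key
  have h5 : ((e / d : ℝ) : ℂ) * (d : ℂ) = (e : ℂ) := by
    push_cast
    field_simp
  apply mul_left_cancel₀ hd0
  linear_combination -key2 + (u * q) * h5

set_option maxHeartbeats 1000000 in
private lemma core (u v w : ℂ) (dA dB dC a b c : ℝ)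
    (posdA : 0 < dA) (posdB : 0 < dB) (posdC : 0 < dC)
    (posa : 0 < a) (posb : 0 < b) (posc : 0 < c)
    (hu : Complex.normSq u = dA ^ 2) (hv : Complex.normSq v = dB ^ 2)
    (hw : Complex.normSq w = dC ^ 2)
    (hbn : Complex.normSq (u - w) = b ^ 2) (han : Complex.normSq (w - v) = a ^ 2)
    (hcn : Complex.normSq (v - u) = c ^ 2)
    (H1 : (starRingEnd ℂ u) * (u - w) * ((dC * a : ℝ) : ℂ)
        = (starRingEnd ℂ w) * (w - v) * ((dA * b : ℝ) : ℂ))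
    (H2 : (starRingEnd ℂ w) * (w - v) * ((dB * c : ℝ) : ℂ)
        = (starRingEnd ℂ v) * (v - u) * ((dC * a : ℝ) : ℂ))
    (hS : ((starRingEnd ℂ u) * (u - w)).im ≠ 0) :
    a ^ 2 * dA = b * c * dB ∧ b ^ 2 * dB = c * a * dC := by
  have hdA0 : ((dA * b : ℝ) : ℂ) ≠ 0 := by
    simp only [ne_eq, Complex.ofReal_eq_zero]; positivity
  have hdC0 : ((dC * a : ℝ) : ℂ) ≠ 0 := by
    simp only [ne_eq, Complex.ofReal_eq_zero]; positivity
  obtain ⟨q, hq1⟩ : ∃ q : ℂ, (starRingEnd ℂ u) * (u - w) = ((dA * b : ℝ) : ℂ) * q :=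
    ⟨(starRingEnd ℂ u) * (u - w) / ((dA * b : ℝ) : ℂ), (mul_div_cancel₀ _ hdA0).symm⟩
  have hq2 : (starRingEnd ℂ w) * (w - v) = ((dC * a : ℝ) : ℂ) * q := by
    apply mul_right_cancel₀ hdA0
    rw [← H1, hq1]; ring
  have hq3 : (starRingEnd ℂ v) * (v - u) = ((dB * c : ℝ) : ℂ) * q := by
    apply mul_right_cancel₀ hdC0
    rw [← H2, hq2]; ring
  have hqnorm : Complex.normSq q = 1 := by
    have h4 := congrArg Complex.normSq hq1
    rw [Complex.normSq_mul, Complex.normSq_conj, hu, hbn, Complex.normSq_mul,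
      Complex.normSq_ofReal] at h4
    have hne : ((dA * b) * (dA * b) : ℝ) ≠ 0 := by positivity
    apply mul_left_cancel₀ hne
    rw [mul_one]
    linear_combination -h4
  have hCS : q.re ^ 2 + q.im ^ 2 = 1 := by
    rw [Complex.normSq_apply] at hqnorm
    linear_combination hqnorm
  have hqim : q.im ≠ 0 := by
    intro h0
    apply hS
    rw [hq1]
    simp [Complex.mul_im, h0]
  have hq0 : q ≠ 0 := by
    intro h0
    rw [h0, map_zero] at hqnorm
    norm_num at hqnorm
  have hu0 : u ≠ 0 := by
    intro h0; rw [h0, map_zero] at hu; nlinarith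
  have hw' : w = u * (1 - ((b / dA : ℝ) : ℂ) * q) := chainstep u w dA b q posdA hu hq1
  have hv' : v = w * (1 - ((a / dC : ℝ) : ℂ) * q) := chainstep w v dC a q posdC hw hq2
  have hu' : u = v * (1 - ((c / dB : ℝ) : ℂ) * q) := chainstep v u dB c q posdB hv hq3
  obtain ⟨x, hxdef⟩ : ∃ x : ℝ, x = b / dA := ⟨_, rfl⟩
  obtain ⟨y, hydef⟩ : ∃ y : ℝ, y = a / dC := ⟨_, rfl⟩
  obtain ⟨z, hzdef⟩ : ∃ z : ℝ, z = c / dB := ⟨_, rfl⟩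
  rw [← hxdef] at hw'
  rw [← hydef] at hv'
  rw [← hzdef] at hu'
  have hxpos : 0 < x := by rw [hxdef]; positivity
  have hypos : 0 < y := by rw [hydef]; positivity
  have hzpos : 0 < z := by rw [hzdef]; positivity
  have hprod : (1 - (x : ℂ) * q) * (1 - (y : ℂ) * q) * (1 - (z : ℂ) * q) = 1 := by
    apply mul_left_cancel₀ hu0
    rw [mul_one]
    calc u * ((1 - (x : ℂ) * q) * (1 - (y : ℂ) * q) * (1 - (z : ℂ) * q))
        = (u * (1 - (x : ℂ) * q)) * (1 - (y : ℂ) * q) * (1 - (z : ℂ) * q) := by ring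
      _ = w * (1 - (y : ℂ) * q) * (1 - (z : ℂ) * q) := by rw [← hw']
      _ = v * (1 - (z : ℂ) * q) := by rw [← hv']
      _ = u := by rw [← hu']
  have hquad : ((x : ℂ) * y * z) * (q * q) - ((x : ℂ) * y + (y : ℂ) * z + (z : ℂ) * x) * q
      + ((x : ℂ) + y + z) = 0 := by
    apply mul_left_cancel₀ hq0
    rw [mul_zero]
    linear_combination -hprod
  have hre := congrArg Complex.re hquad
  have him := congrArg Complex.im hquad
  simp only [Complex.add_re, Complex.sub_re, Complex.mul_re, Complex.mul_im,
    Complex.add_im, Complex.sub_im, Complex.ofReal_re, Complex.ofReal_im,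
    Complex.zero_re, Complex.zero_im] at hre him
  have hE2 : x * y + y * z + z * x = 2 * q.re * (x * y * z) := by
    have hfac : q.im * (2 * q.re * (x * y * z) - (x * y + y * z + z * x)) = 0 := by
      linear_combination him
    rcases mul_eq_zero.mp hfac with h | h
    · exact absurd h hqim
    · linarith
  have hE : x + y + z = x * y * z := by
    linear_combination hre + q.re * hE2 + (x * y * z) * hCS
  have hnormfac : ∀ t : ℝ, Complex.normSq (1 - (t : ℂ) * q) = 1 - 2 * q.re * t + t ^ 2 := by
    intro t
    rw [Complex.normSq_apply]
    simp only [Complex.sub_re, Complex.sub_im, Complex.one_re, Complex.one_im,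
      Complex.mul_re, Complex.mul_im, Complex.ofReal_re, Complex.ofReal_im]
    nlinarith [hCS]
  have hnv : dB ^ 2 = dC ^ 2 * (1 - 2 * q.re * y + y ^ 2) := by
    rw [← hv, ← hw, hv', Complex.normSq_mul, hnormfac]
  have hnu : dA ^ 2 = dB ^ 2 * (1 - 2 * q.re * z + z ^ 2) := by
    rw [← hu, ← hv, hu', Complex.normSq_mul, hnormfac]
  have key1 : x * z * (1 - 2 * q.re * y + y ^ 2) = y ^ 2 := by
    linear_combination hE2 - y * hE
  have key2 : x * y * (1 - 2 * q.re * z + z ^ 2) = z ^ 2 := by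
    linear_combination hE2 - z * hE
  have hdAne : dA ≠ 0 := ne_of_gt posdA
  have hdBne : dB ≠ 0 := ne_of_gt posdB
  have hdCne : dC ≠ 0 := ne_of_gt posdC
  have G1 : a ^ 2 * dA = b * c * dB := by
    have h5 : dB ^ 2 * (x * z) = dC ^ 2 * y ^ 2 := by
      linear_combination dC ^ 2 * key1 + (x * z) * hnv
    have hxz : dB ^ 2 * (x * z) = dB * (b * c) / dA := by
      rw [hxdef, hzdef]; field_simp
    have hy2 : dC ^ 2 * y ^ 2 = a ^ 2 := by
      rw [hydef]; field_simp
    rw [hxz, hy2, div_eq_iff hdAne] at h5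
    linarith
  have G3 : a * b * dA = c ^ 2 * dC := by
    have h5 : dA ^ 2 * (x * y) = dB ^ 2 * z ^ 2 := by
      linear_combination dB ^ 2 * key2 + (x * y) * hnu
    have hxy : dA ^ 2 * (x * y) = dA * (b * a) / dC := by
      rw [hxdef, hydef]; field_simp
    have hz2 : dB ^ 2 * z ^ 2 = c ^ 2 := by
      rw [hzdef]; field_simp
    rw [hxy, hz2, div_eq_iff hdCne] at h5
    linarith
  refine ⟨G1, ?_⟩
  have h6 : c * (b ^ 2 * dB) = c * (c * a * dC) := by
    linear_combination a * G3 - b * G1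
  exact mul_left_cancel₀ (ne_of_gt posc) h6

private lemma pedalA (x y e0 e1 f0 f1 β γ : ℝ) (hβ : β = e0^2+e1^2) (hγ : γ = f0^2+f1^2)
    (hβ0 : β ≠ 0) (hγ0 : γ ≠ 0) :
    ((x/β*e0 - y/γ*f0)^2 + (x/β*e1 - y/γ*f1)^2) * (β*γ)
      = x^2*γ - 2*x*y*(e0*f0+e1*f1) + y^2*β := by
  field_simp
  subst hβ hγ
  ring

private lemma pedalB (p0 p1 e0 e1 f0 f1 : ℝ) :
    (p0*e0+p1*e1)^2*(f0^2+f1^2) - 2*(p0*e0+p1*e1)*(p0*f0+p1*f1)*(e0*f0+e1*f1)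
      + (p0*f0+p1*f1)^2*(e0^2+e1^2) = (p0^2+p1^2)*(e0*f1-e1*f0)^2 := by ring

private lemma pedal_core (P A B C F G : E2)
    (hF : F = (⟪P - A, C - A⟫ / ⟪C - A, C - A⟫) • (C - A) + A)
    (hG : G = (⟪P - B, A - B⟫ / ⟪A - B, A - B⟫) • (A - B) + B)
    (hCA : C ≠ A) (hAB : A ≠ B) :
    dist F G ^ 2 * (⟪C - A, C - A⟫ * ⟪A - B, A - B⟫)
      = dist P A ^ 2 * cr (B - A) (C - A) ^ 2 := by
  have hβ : ⟪C - A, C - A⟫ = (C 0 - A 0)^2 + (C 1 - A 1)^2 := by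
    rw [inner_coords]; simp only [PiLp.sub_apply]; ring
  have hγ : ⟪A - B, A - B⟫ = (A 0 - B 0)^2 + (A 1 - B 1)^2 := by
    rw [inner_coords]; simp only [PiLp.sub_apply]; ring
  have hβpos : (0:ℝ) < (C 0 - A 0)^2 + (C 1 - A 1)^2 := by
    rw [← dist_sq_coords]
    have := dist_pos.mpr hCA
    positivity
  have hγpos : (0:ℝ) < (A 0 - B 0)^2 + (A 1 - B 1)^2 := by
    rw [← dist_sq_coords]
    have := dist_pos.mpr hAB
    positivity
  have hβ0 := ne_of_gt hβpos
  have hγ0 := ne_of_gt hγpos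
  set p0 : ℝ := P 0 - A 0 with hp0
  set p1 : ℝ := P 1 - A 1 with hp1
  set e0 : ℝ := C 0 - A 0 with he0
  set e1 : ℝ := C 1 - A 1 with he1
  set f0 : ℝ := A 0 - B 0 with hf0
  set f1 : ℝ := A 1 - B 1 with hf1
  have hx : ⟪P - A, C - A⟫ = p0*e0 + p1*e1 := by
    rw [inner_coords]; simp only [PiLp.sub_apply, ← hp0, ← hp1, ← he0, ← he1]; try ring
  have hy : ⟪P - B, A - B⟫ = (p0*f0 + p1*f1) + (f0^2 + f1^2) := by
    rw [inner_coords]; simp only [PiLp.sub_apply, ← hp0, ← hp1, ← hf0, ← hf1]; try ring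
  have hdiff0 : F 0 - G 0 = (p0*e0+p1*e1)/(e0^2+e1^2)*e0 - (p0*f0+p1*f1)/(f0^2+f1^2)*f0 := by
    rw [hF, hG, hx, hy, hβ, hγ]
    simp only [PiLp.add_apply, PiLp.smul_apply, PiLp.sub_apply, smul_eq_mul,
      ← he0, ← he1, ← hf0, ← hf1]
    field_simp
    ring
  have hdiff1 : F 1 - G 1 = (p0*e0+p1*e1)/(e0^2+e1^2)*e1 - (p0*f0+p1*f1)/(f0^2+f1^2)*f1 := by
    rw [hF, hG, hx, hy, hβ, hγ]
    simp only [PiLp.add_apply, PiLp.smul_apply, PiLp.sub_apply, smul_eq_mul,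
      ← he0, ← he1, ← hf0, ← hf1]
    field_simp
    ring
  rw [dist_sq_coords F G, hdiff0, hdiff1, hβ, hγ,
    pedalA (p0*e0+p1*e1) (p0*f0+p1*f1) e0 e1 f0 f1 _ _ rfl rfl hβ0 hγ0,
    pedalB p0 p1 e0 e1 f0 f1, dist_sq_coords P A]
  simp only [cr, PiLp.sub_apply, ← hp0, ← hp1, ← he0, ← he1, ← hf0, ← hf1]
  ring
set_option maxHeartbeats 1600000 in
theorem stmt8 (A B C O Ω₂ A₁ B₁ C₁ : EuclideanSpace ℝ (Fin 2)) (R a b c : ℝ)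
    (hABC : AffineIndependent ℝ ![A, B, C])
    (hR : 0 < R) (hOA : dist O A = R) (hOB : dist O B = R) (hOC : dist O C = R)
    (ha : a = dist B C) (hb : b = dist C A) (hc : c = dist A B)
    (hΩ : Ω₂ ∈ interior (convexHull ℝ ({A, B, C} : Set (EuclideanSpace ℝ (Fin 2)))))
    (hBr₁ : ∠ Ω₂ A C = ∠ Ω₂ C B) (hBr₂ : ∠ Ω₂ C B = ∠ Ω₂ B A)
    (hA₁ : A₁ = EuclideanGeometry.orthogonalProjection (affineSpan ℝ {B, C}) Ω₂)
    (hB₁ : B₁ = EuclideanGeometry.orthogonalProjection (affineSpan ℝ {C, A}) Ω₂)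
    (hC₁ : C₁ = EuclideanGeometry.orthogonalProjection (affineSpan ℝ {A, B}) Ω₂) :
    a * dist B₁ C₁ = c * dist C₁ A₁ ∧ b * dist C₁ A₁ = a * dist A₁ B₁ := by
  have hK : cr (B - A) (C - A) ≠ 0 := cr_ne_zero_of_affineIndependent hABC
  set P : E2 := Ω₂ with hPdef
  set K : ℝ := cr (B - A) (C - A) with hKdef
  -- vertex distinctness & side positivity
  have hAB : A ≠ B := by
    intro h
    apply hK
    rw [hKdef, ← h]
    simp [cr, sub_self]
  have hBC : B ≠ C := by
    intro h
    apply hK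
    rw [hKdef, h]
    simp only [cr, PiLp.sub_apply]
    ring
  have hCA : C ≠ A := by
    intro h
    apply hK
    rw [hKdef, h]
    simp [cr, sub_self]
  have hapos : 0 < a := by rw [ha]; exact dist_pos.mpr hBC
  have hbpos : 0 < b := by rw [hb]; exact dist_pos.mpr (Ne.symm hCA).symm
  have hcpos : 0 < c := by rw [hc]; exact dist_pos.mpr hAB
  -- interior sign facts
  have hsetsB : ({B, C, A} : Set E2) = {A, B, C} := by
    ext x; simp only [Set.mem_insert_iff, Set.mem_singleton_iff]; tauto
  have hsetsC : ({C, A, B} : Set E2) = {A, B, C} := by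
    ext x; simp only [Set.mem_insert_iff, Set.mem_singleton_iff]; tauto
  have hKB : cr (C - B) (A - B) = K := by
    rw [hKdef]; simp only [cr, PiLp.sub_apply]; ring
  have hKC : cr (A - C) (B - C) = K := by
    rw [hKdef]; simp only [cr, PiLp.sub_apply]; ring
  have sA : 0 < K * cr (P - A) (C - A) := interior_cr_pos hK hΩ
  have sB : 0 < K * cr (P - B) (A - B) := by
    have h := interior_cr_pos (A := B) (B := C) (C := A) (P := P)
      (by rw [hKB]; exact hK) (by rw [hsetsB]; exact hΩ)
    rwa [hKB] at h
  have sC : 0 < K * cr (P - C) (B - C) := by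
    have h := interior_cr_pos (A := C) (B := A) (C := B) (P := P)
      (by rw [hKC]; exact hK) (by rw [hsetsC]; exact hΩ)
    rwa [hKC] at h
  have hPA : P ≠ A := by
    intro h
    rw [h, sub_self] at sA
    simp only [cr] at sA
    norm_num at sA
  have hPB : P ≠ B := by
    intro h
    rw [h, sub_self] at sB
    simp only [cr] at sB
    norm_num at sB
  have hPC : P ≠ C := by
    intro h
    rw [h, sub_self] at sC
    simp only [cr] at sC
    norm_num at sC
  set dA : ℝ := dist P A with hdA
  set dB : ℝ := dist P B with hdB
  set dC : ℝ := dist P C with hdC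
  have hdApos : 0 < dA := dist_pos.mpr hPA
  have hdBpos : 0 < dB := dist_pos.mpr hPB
  have hdCpos : 0 < dC := dist_pos.mpr hPC
  -- cosine equalities
  have ecosA : Real.cos (∠ P A C) * (dA * b) = ⟪P - A, C - A⟫ := by
    have h := InnerProductGeometry.cos_angle_mul_norm_mul_norm (P - A) (C - A)
    rw [show ∠ P A C = InnerProductGeometry.angle (P - A) (C - A) from rfl]
    rwa [← dist_eq_norm, ← dist_eq_norm, ← hdA, ← hb] at h
  have ecosC : Real.cos (∠ P C B) * (dC * a) = ⟪P - C, B - C⟫ := by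
    have h := InnerProductGeometry.cos_angle_mul_norm_mul_norm (P - C) (B - C)
    rw [show ∠ P C B = InnerProductGeometry.angle (P - C) (B - C) from rfl]
    rwa [← dist_eq_norm, ← dist_eq_norm, ← hdC, ← ha] at h
  have ecosB : Real.cos (∠ P B A) * (dB * c) = ⟪P - B, A - B⟫ := by
    have h := InnerProductGeometry.cos_angle_mul_norm_mul_norm (P - B) (A - B)
    rw [show ∠ P B A = InnerProductGeometry.angle (P - B) (A - B) from rfl]
    rwa [← dist_eq_norm, ← dist_eq_norm, ← hdB, ← hc] at h
  have hcos1 : ⟪P - A, C - A⟫ * (dC * a) = ⟪P - C, B - C⟫ * (dA * b) := by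
    rw [← ecosA, ← ecosC, congrArg Real.cos hBr₁]
    ring
  have hcos2 : ⟪P - C, B - C⟫ * (dB * c) = ⟪P - B, A - B⟫ * (dC * a) := by
    rw [← ecosC, ← ecosB, congrArg Real.cos hBr₂]
    ring
  -- sine equalities
  have esinA : Real.sin (∠ P A C) * (dA * b) = |cr (P - A) (C - A)| := by
    have h := InnerProductGeometry.sin_angle_mul_norm_mul_norm (P - A) (C - A)
    have hid : ⟪P - A, P - A⟫ * ⟪C - A, C - A⟫ - ⟪P - A, C - A⟫ * ⟪P - A, C - A⟫
        = cr (P - A) (C - A) ^ 2 := by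
      simp only [inner_coords, cr, PiLp.sub_apply]; ring
    rw [hid, Real.sqrt_sq_eq_abs] at h
    rw [show ∠ P A C = InnerProductGeometry.angle (P - A) (C - A) from rfl]
    rwa [← dist_eq_norm, ← dist_eq_norm, ← hdA, ← hb] at h
  have esinC : Real.sin (∠ P C B) * (dC * a) = |cr (P - C) (B - C)| := by
    have h := InnerProductGeometry.sin_angle_mul_norm_mul_norm (P - C) (B - C)
    have hid : ⟪P - C, P - C⟫ * ⟪B - C, B - C⟫ - ⟪P - C, B - C⟫ * ⟪P - C, B - C⟫
        = cr (P - C) (B - C) ^ 2 := by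
      simp only [inner_coords, cr, PiLp.sub_apply]; ring
    rw [hid, Real.sqrt_sq_eq_abs] at h
    rw [show ∠ P C B = InnerProductGeometry.angle (P - C) (B - C) from rfl]
    rwa [← dist_eq_norm, ← dist_eq_norm, ← hdC, ← ha] at h
  have esinB : Real.sin (∠ P B A) * (dB * c) = |cr (P - B) (A - B)| := by
    have h := InnerProductGeometry.sin_angle_mul_norm_mul_norm (P - B) (A - B)
    have hid : ⟪P - B, P - B⟫ * ⟪A - B, A - B⟫ - ⟪P - B, A - B⟫ * ⟪P - B, A - B⟫
        = cr (P - B) (A - B) ^ 2 := by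
      simp only [inner_coords, cr, PiLp.sub_apply]; ring
    rw [hid, Real.sqrt_sq_eq_abs] at h
    rw [show ∠ P B A = InnerProductGeometry.angle (P - B) (A - B) from rfl]
    rwa [← dist_eq_norm, ← dist_eq_norm, ← hdB, ← hc] at h
  have habs1 : |cr (P - A) (C - A)| * (dC * a) = |cr (P - C) (B - C)| * (dA * b) := by
    rw [← esinA, ← esinC, congrArg Real.sin hBr₁]
    ring
  have habs2 : |cr (P - C) (B - C)| * (dB * c) = |cr (P - B) (A - B)| * (dC * a) := by
    rw [← esinC, ← esinB, congrArg Real.sin hBr₂]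
    ring
  have hsin1 : cr (P - A) (C - A) * (dC * a) = cr (P - C) (B - C) * (dA * b) := by
    rcases lt_trichotomy K 0 with hKl | hK0 | hKg
    · have h1 : cr (P - A) (C - A) < 0 := by nlinarith [sA]
      have h2 : cr (P - C) (B - C) < 0 := by nlinarith [sC]
      rw [abs_of_neg h1, abs_of_neg h2] at habs1
      linarith
    · exact absurd hK0 hK
    · have h1 : 0 < cr (P - A) (C - A) := by nlinarith [sA]
      have h2 : 0 < cr (P - C) (B - C) := by nlinarith [sC]
      rw [abs_of_pos h1, abs_of_pos h2] at habs1
      linarith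
  have hsin2 : cr (P - C) (B - C) * (dB * c) = cr (P - B) (A - B) * (dC * a) := by
    rcases lt_trichotomy K 0 with hKl | hK0 | hKg
    · have h1 : cr (P - C) (B - C) < 0 := by nlinarith [sC]
      have h2 : cr (P - B) (A - B) < 0 := by nlinarith [sB]
      rw [abs_of_neg h1, abs_of_neg h2] at habs2
      linarith
    · exact absurd hK0 hK
    · have h1 : 0 < cr (P - C) (B - C) := by nlinarith [sC]
      have h2 : 0 < cr (P - B) (A - B) := by nlinarith [sB]
      rw [abs_of_pos h1, abs_of_pos h2] at habs2
      linarith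
  have hcrA : cr (P - A) (C - A) ≠ 0 := by
    intro h
    rw [h, mul_zero] at sA
    exact lt_irrefl 0 sA
  -- complex setup
  set u : ℂ := ⟨P 0 - A 0, P 1 - A 1⟩ with hu
  set v : ℂ := ⟨P 0 - B 0, P 1 - B 1⟩ with hv
  set w : ℂ := ⟨P 0 - C 0, P 1 - C 1⟩ with hw
  have hure : u.re = P 0 - A 0 := rfl
  have huim : u.im = P 1 - A 1 := rfl
  have hwre : w.re = P 0 - C 0 := rfl
  have hwim : w.im = P 1 - C 1 := rfl
  have hvre : v.re = P 0 - B 0 := rfl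
  have hvim : v.im = P 1 - B 1 := rfl
  have huN : Complex.normSq u = dA ^ 2 := by
    rw [hu, Complex.normSq_mk, hdA, dist_sq_coords]
    ring
  have hvN : Complex.normSq v = dB ^ 2 := by
    rw [hv, Complex.normSq_mk, hdB, dist_sq_coords]
    ring
  have hwN : Complex.normSq w = dC ^ 2 := by
    rw [hw, Complex.normSq_mk, hdC, dist_sq_coords]
    ring
  have hbN : Complex.normSq (u - w) = b ^ 2 := by
    rw [Complex.normSq_apply, Complex.sub_re, Complex.sub_im, hure, huim, hwre, hwim,
      hb, dist_sq_coords]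
    ring
  have haN : Complex.normSq (w - v) = a ^ 2 := by
    rw [Complex.normSq_apply, Complex.sub_re, Complex.sub_im, hwre, hwim, hvre, hvim,
      ha, dist_sq_coords]
    ring
  have hcN : Complex.normSq (v - u) = c ^ 2 := by
    rw [Complex.normSq_apply, Complex.sub_re, Complex.sub_im, hvre, hvim, hure, huim,
      hc, dist_sq_coords]
    ring
  have hcos1' : ((P 0 - A 0) * (C 0 - A 0) + (P 1 - A 1) * (C 1 - A 1)) * (dC * a)
      = ((P 0 - C 0) * (B 0 - C 0) + (P 1 - C 1) * (B 1 - C 1)) * (dA * b) := by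
    simpa only [inner_coords, PiLp.sub_apply] using hcos1
  have hsin1' : ((P 0 - A 0) * (C 1 - A 1) - (P 1 - A 1) * (C 0 - A 0)) * (dC * a)
      = ((P 0 - C 0) * (B 1 - C 1) - (P 1 - C 1) * (B 0 - C 0)) * (dA * b) := by
    simpa only [cr, PiLp.sub_apply] using hsin1
  have hcos2' : ((P 0 - C 0) * (B 0 - C 0) + (P 1 - C 1) * (B 1 - C 1)) * (dB * c)
      = ((P 0 - B 0) * (A 0 - B 0) + (P 1 - B 1) * (A 1 - B 1)) * (dC * a) := by
    simpa only [inner_coords, PiLp.sub_apply] using hcos2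
  have hsin2' : ((P 0 - C 0) * (B 1 - C 1) - (P 1 - C 1) * (B 0 - C 0)) * (dB * c)
      = ((P 0 - B 0) * (A 1 - B 1) - (P 1 - B 1) * (A 0 - B 0)) * (dC * a) := by
    simpa only [cr, PiLp.sub_apply] using hsin2
  have H1 : (starRingEnd ℂ u) * (u - w) * ((dC * a : ℝ) : ℂ)
      = (starRingEnd ℂ w) * (w - v) * ((dA * b : ℝ) : ℂ) := by
    apply Complex.ext
    · simp only [Complex.mul_re, Complex.mul_im, Complex.conj_re, Complex.conj_im,
        Complex.sub_re, Complex.sub_im, Complex.ofReal_re, Complex.ofReal_im,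
        hure, huim, hwre, hwim, hvre, hvim]
      linear_combination hcos1'
    · simp only [Complex.mul_re, Complex.mul_im, Complex.conj_re, Complex.conj_im,
        Complex.sub_re, Complex.sub_im, Complex.ofReal_re, Complex.ofReal_im,
        hure, huim, hwre, hwim, hvre, hvim]
      linear_combination hsin1'
  have H2 : (starRingEnd ℂ w) * (w - v) * ((dB * c : ℝ) : ℂ)
      = (starRingEnd ℂ v) * (v - u) * ((dC * a : ℝ) : ℂ) := by
    apply Complex.ext
    · simp only [Complex.mul_re, Complex.mul_im, Complex.conj_re, Complex.conj_im,
        Complex.sub_re, Complex.sub_im, Complex.ofReal_re, Complex.ofReal_im,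
        hure, huim, hwre, hwim, hvre, hvim]
      linear_combination hcos2'
    · simp only [Complex.mul_re, Complex.mul_im, Complex.conj_re, Complex.conj_im,
        Complex.sub_re, Complex.sub_im, Complex.ofReal_re, Complex.ofReal_im,
        hure, huim, hwre, hwim, hvre, hvim]
      linear_combination hsin2'
  have hS : ((starRingEnd ℂ u) * (u - w)).im ≠ 0 := by
    have him : ((starRingEnd ℂ u) * (u - w)).im = cr (P - A) (C - A) := by
      simp only [Complex.mul_im, Complex.conj_re, Complex.conj_im,
        Complex.sub_re, Complex.sub_im, hure, huim, hwre, hwim, cr, PiLp.sub_apply]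
      ring
    rw [him]
    exact hcrA
  obtain ⟨G1, G2⟩ := core u v w dA dB dC a b c hdApos hdBpos hdCpos hapos hbpos hcpos
    huN hvN hwN hbN haN hcN H1 H2 hS
  -- pedal feet
  have hB₁' : B₁ = (⟪P - A, C - A⟫ / ⟪C - A, C - A⟫) • (C - A) + A := by
    rw [hB₁]; exact foot_eq A C P hCA
  have hC₁' : C₁ = (⟪P - B, A - B⟫ / ⟪A - B, A - B⟫) • (A - B) + B := by
    rw [hC₁]; exact foot_eq B A P hAB
  have hA₁' : A₁ = (⟪P - C, B - C⟫ / ⟪B - C, B - C⟫) • (B - C) + C := by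
    rw [hA₁]; exact foot_eq C B P hBC
  -- inner self values
  have hbb : ⟪C - A, C - A⟫ = b ^ 2 := by
    rw [inner_coords, hb, dist_sq_coords]
    simp only [PiLp.sub_apply]
    ring
  have hcc : ⟪A - B, A - B⟫ = c ^ 2 := by
    rw [inner_coords, hc, dist_sq_coords]
    simp only [PiLp.sub_apply]
    ring
  have haa : ⟪B - C, B - C⟫ = a ^ 2 := by
    rw [inner_coords, ha, dist_sq_coords]
    simp only [PiLp.sub_apply]
    ring
  have I1 : dist B₁ C₁ ^ 2 * (b ^ 2 * c ^ 2) = dA ^ 2 * K ^ 2 := by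
    have h := pedal_core P A B C B₁ C₁ hB₁' hC₁' hCA hAB
    rwa [hbb, hcc, ← hdA, ← hKdef] at h
  have I2 : dist C₁ A₁ ^ 2 * (c ^ 2 * a ^ 2) = dB ^ 2 * K ^ 2 := by
    have h := pedal_core P B C A C₁ A₁ hC₁' hA₁' hAB hBC
    rwa [hcc, haa, ← hdB, hKB] at h
  have I3 : dist A₁ B₁ ^ 2 * (a ^ 2 * b ^ 2) = dC ^ 2 * K ^ 2 := by
    have h := pedal_core P C A B A₁ B₁ hA₁' hB₁' hBC hCA
    rwa [haa, hbb, ← hdC, hKC] at h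
  have habc : (0:ℝ) < a ^ 2 * b ^ 2 * c ^ 2 := by positivity
  constructor
  · have hsq : (a * dist B₁ C₁) ^ 2 * (a ^ 2 * b ^ 2 * c ^ 2)
        = (c * dist C₁ A₁) ^ 2 * (a ^ 2 * b ^ 2 * c ^ 2) := by
      have expand : (a * dist B₁ C₁) ^ 2 * (a ^ 2 * b ^ 2 * c ^ 2)
          = a ^ 4 * (dist B₁ C₁ ^ 2 * (b ^ 2 * c ^ 2)) := by ring
      have expand2 : (c * dist C₁ A₁) ^ 2 * (a ^ 2 * b ^ 2 * c ^ 2)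
          = b ^ 2 * c ^ 2 * (dist C₁ A₁ ^ 2 * (c ^ 2 * a ^ 2)) := by ring
      rw [expand, expand2, I1, I2]
      linear_combination K ^ 2 * (a ^ 2 * dA + b * c * dB) * G1
    have hsq2 : (a * dist B₁ C₁) ^ 2 = (c * dist C₁ A₁) ^ 2 :=
      mul_right_cancel₀ (ne_of_gt habc) hsq
    have h1 : 0 ≤ a * dist B₁ C₁ := by positivity
    have h2 : 0 ≤ c * dist C₁ A₁ := by positivity
    calc a * dist B₁ C₁ = √((a * dist B₁ C₁) ^ 2) := (Real.sqrt_sq h1).symm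
      _ = √((c * dist C₁ A₁) ^ 2) := by rw [hsq2]
      _ = c * dist C₁ A₁ := Real.sqrt_sq h2
  · have hsq : (b * dist C₁ A₁) ^ 2 * (a ^ 2 * b ^ 2 * c ^ 2)
        = (a * dist A₁ B₁) ^ 2 * (a ^ 2 * b ^ 2 * c ^ 2) := by
      have expand : (b * dist C₁ A₁) ^ 2 * (a ^ 2 * b ^ 2 * c ^ 2)
          = b ^ 4 * (dist C₁ A₁ ^ 2 * (c ^ 2 * a ^ 2)) := by ring
      have expand2 : (a * dist A₁ B₁) ^ 2 * (a ^ 2 * b ^ 2 * c ^ 2)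
          = c ^ 2 * a ^ 2 * (dist A₁ B₁ ^ 2 * (a ^ 2 * b ^ 2)) := by ring
      rw [expand, expand2, I2, I3]
      linear_combination K ^ 2 * (b ^ 2 * dB + c * a * dC) * G2
    have hsq2 : (b * dist C₁ A₁) ^ 2 = (a * dist A₁ B₁) ^ 2 :=
      mul_right_cancel₀ (ne_of_gt habc) hsq
    have h1 : 0 ≤ b * dist C₁ A₁ := by positivity
    have h2 : 0 ≤ a * dist A₁ B₁ := by positivity
    calc b * dist C₁ A₁ = √((b * dist C₁ A₁) ^ 2) := (Real.sqrt_sq h1).symm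
      _ = √((a * dist A₁ B₁) ^ 2) := by rw [hsq2]
      _ = a * dist A₁ B₁ := Real.sqrt_sq h2
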